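/- arXiv:1203.6308 — 2 statements merged into one kernel-verified Lean document; each statement's English description precedes it below -/
import Mathlib

section
/- Let G be a group with length function L. Suppose there exists a polynomial P such that for every r > 0 and every nonnegative finitely supported f: G → ℝ≥0 supported in {g : L(g) ≤ r}, ‖λ(f)‖ ≤ P(r)‖f‖₂. Then there exist constants C, s > 0 such that ‖λ(f)‖ ≤ C‖f‖_{s,L} for all finitely supported complex functions f on G. -/
open scoped BigOperators

/-- A length function on a group `G`. -/
def IsLengthFunction {G : Type*} [Group G] (L : G → ℝ) : Prop :=
  (∀ g, 0 ≤ L g) ∧ (∀ g h, L (g * h) ≤ L g + L h) ∧ (∀ g, L g⁻¹ = L g) ∧ L 1 = 0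

/-- The `ℓ²`-norm of a function (junk value `0` if not square-summable). -/
noncomputable def l2f {α : Type*} (φ : α → ℂ) : ℝ :=
  Real.sqrt (∑' x, ‖φ x‖ ^ 2)

/-- Convolution of a finitely supported function with an arbitrary function on `G`. -/
noncomputable def convG {G : Type*} [Group G] (f : G →₀ ℂ) (k : G → ℂ) : G → ℂ :=
  fun g => ∑ x ∈ f.support, f x * k (x⁻¹ * g)

/-- The operator norm of the left regular representation `λ(f)` on `ℓ²(G)`. -/
noncomputable def opNG {G : Type*} [Group G] (f : G →₀ ℂ) : ℝ :=
  sSup {c : ℝ | ∃ ξ : G →₀ ℂ, l2f ⇑ξ ≤ 1 ∧ c = l2f (convG f ⇑ξ)}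

/-- The weighted `ℓ²`-norm `‖f‖_{s,L}`. -/
noncomputable def wnormG {G : Type*} [Group G] (L : G → ℝ) (s : ℝ) (f : G →₀ ℂ) : ℝ :=
  Real.sqrt (∑ g ∈ f.support, ‖f g‖ ^ 2 * (1 + L g) ^ (2 * s))

/-- A complex-valued function is nonnegative real valued. -/
def NonnegFun {α : Type*} (f : α → ℂ) : Prop := ∀ x, ∃ t : ℝ, 0 ≤ t ∧ f x = t

open scoped Pointwise

section Aux

variable {G : Type*} [Group G] [DecidableEq G]
set_option linter.unusedSectionVars false

noncomputable def eVec (S : Finset G) (φ : G → ℂ) : EuclideanSpace ℂ S := WithLp.toLp 2 (fun i => φ i)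

lemma l2f_eq_sum {S : Finset G} {φ : G → ℂ} (h : ∀ g, φ g ≠ 0 → g ∈ S) :
    l2f φ = Real.sqrt (∑ g ∈ S, ‖φ g‖ ^ 2) := by
  unfold l2f
  congr 1
  refine tsum_eq_sum ?_
  intro g hg
  by_cases h0 : φ g = 0
  · simp [h0]
  · exact absurd (h g h0) hg

lemma l2f_eq_norm_eVec {S : Finset G} {φ : G → ℂ} (h : ∀ g, φ g ≠ 0 → g ∈ S) :
    l2f φ = ‖eVec S φ‖ := by
  rw [l2f_eq_sum h, EuclideanSpace.norm_eq]
  congr 1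
  rw [← Finset.sum_coe_sort S (fun g => ‖φ g‖ ^ 2)]
  rfl

lemma l2f_nonneg {α : Type*} (φ : α → ℂ) : 0 ≤ l2f φ := Real.sqrt_nonneg _

lemma l2f_translate (x : G) (ξ : G → ℂ) : l2f (fun g => ξ (x⁻¹ * g)) = l2f ξ := by
  unfold l2f
  congr 1
  exact Equiv.tsum_eq (Equiv.mulLeft x⁻¹) (fun g => ‖ξ g‖ ^ 2)

lemma convG_eq_sum_subset {f : G →₀ ℂ} {T : Finset G} (hT : f.support ⊆ T) (k : G → ℂ)
    (g : G) : convG f k g = ∑ x ∈ T, f x * k (x⁻¹ * g) :=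
  Finset.sum_subset hT (fun x _ hx => by simp [Finsupp.notMem_support_iff.mp hx])

lemma convG_support {f ξ : G →₀ ℂ} {g : G} (h : convG f ⇑ξ g ≠ 0) :
    g ∈ f.support * ξ.support := by
  unfold convG at h
  obtain ⟨x, hx, hxg⟩ := Finset.exists_ne_zero_of_sum_ne_zero h
  have h1 : ξ (x⁻¹ * g) ≠ 0 := fun h0 => hxg (by simp [h0])
  have h2 : x * (x⁻¹ * g) = g := by group
  exact h2 ▸ Finset.mul_mem_mul hx (Finsupp.mem_support_iff.mpr h1)

lemma eVec_sum {ι : Type*} (S : Finset G) (t : Finset ι) (F : ι → G → ℂ) :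
    eVec S (fun g => ∑ i ∈ t, F i g) = ∑ i ∈ t, eVec S (F i) := by
  classical
  induction t using Finset.induction with
  | empty => ext j; simp [eVec, PiLp.zero_apply]
  | insert _ _ h ih =>
      ext j
      simp only [Finset.sum_insert h, PiLp.add_apply, ← ih]
      rfl

lemma l2f_conv_le_l1 (f ξ : G →₀ ℂ) :
    l2f (convG f ⇑ξ) ≤ (∑ x ∈ f.support, ‖f x‖) * l2f ⇑ξ := by
  set S := f.support * ξ.support with hS
  have hsupp : ∀ g, convG f ⇑ξ g ≠ 0 → g ∈ S := fun g h => convG_support h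
  rw [l2f_eq_norm_eVec hsupp]
  have key : eVec S (convG f ⇑ξ) = ∑ x ∈ f.support, f x • eVec S (fun g => ξ (x⁻¹ * g)) := by
    rw [show convG f ⇑ξ = fun g => ∑ x ∈ f.support, f x * ξ (x⁻¹ * g) from rfl, eVec_sum]
    refine Finset.sum_congr rfl fun x _ => ?_
    ext j
    simp [eVec, PiLp.smul_apply, smul_eq_mul]
  rw [key]
  calc ‖∑ x ∈ f.support, f x • eVec S (fun g => ξ (x⁻¹ * g))‖
      ≤ ∑ x ∈ f.support, ‖f x • eVec S (fun g => ξ (x⁻¹ * g))‖ := norm_sum_le _ _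
    _ = ∑ x ∈ f.support, ‖f x‖ * l2f ⇑ξ := by
        refine Finset.sum_congr rfl fun x hx => ?_
        rw [norm_smul]
        congr 1
        rw [← l2f_eq_norm_eVec (fun g hg => ?_), l2f_translate]
        have h2 : x * (x⁻¹ * g) = g := by group
        exact h2 ▸ Finset.mul_mem_mul hx (Finsupp.mem_support_iff.mpr hg)
    _ = (∑ x ∈ f.support, ‖f x‖) * l2f ⇑ξ := (Finset.sum_mul _ _ _).symm

lemma l2f_zero : l2f (⇑(0 : G →₀ ℂ)) = 0 := by
  simp [l2f]

lemma opSet_nonempty (f : G →₀ ℂ) :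
    {c : ℝ | ∃ ξ : G →₀ ℂ, l2f ⇑ξ ≤ 1 ∧ c = l2f (convG f ⇑ξ)}.Nonempty :=
  ⟨l2f (convG f ⇑(0 : G →₀ ℂ)), 0, by rw [l2f_zero]; norm_num, rfl⟩

lemma opSet_bddAbove (f : G →₀ ℂ) :
    BddAbove {c : ℝ | ∃ ξ : G →₀ ℂ, l2f ⇑ξ ≤ 1 ∧ c = l2f (convG f ⇑ξ)} := by
  refine ⟨∑ x ∈ f.support, ‖f x‖, ?_⟩
  rintro c ⟨ξ, hξ, rfl⟩
  calc l2f (convG f ⇑ξ) ≤ (∑ x ∈ f.support, ‖f x‖) * l2f ⇑ξ := l2f_conv_le_l1 f ξ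
    _ ≤ (∑ x ∈ f.support, ‖f x‖) * 1 := by
        refine mul_le_mul_of_nonneg_left hξ (Finset.sum_nonneg fun x _ => norm_nonneg _)
    _ = _ := mul_one _

lemma opNG_le {f : G →₀ ℂ} {M : ℝ}
    (h : ∀ ξ : G →₀ ℂ, l2f ⇑ξ ≤ 1 → l2f (convG f ⇑ξ) ≤ M) : opNG f ≤ M :=
  csSup_le (opSet_nonempty f) (by rintro c ⟨ξ, hξ, rfl⟩; exact h ξ hξ)

lemma le_opNG (f ξ : G →₀ ℂ) (hξ : l2f ⇑ξ ≤ 1) : l2f (convG f ⇑ξ) ≤ opNG f :=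
  le_csSup (opSet_bddAbove f) ⟨ξ, hξ, rfl⟩

noncomputable def fabs (f : G →₀ ℂ) : G →₀ ℂ := f.mapRange (fun z => (‖z‖ : ℂ)) (by simp)

lemma fabs_apply (f : G →₀ ℂ) (g : G) : fabs f g = (‖f g‖ : ℂ) := Finsupp.mapRange_apply

lemma fabs_support (f : G →₀ ℂ) : (fabs f).support = f.support := by
  ext g
  simp [Finsupp.mem_support_iff, fabs_apply]

lemma fabs_nonnegFun (f : G →₀ ℂ) : NonnegFun ⇑(fabs f) :=
  fun x => ⟨‖f x‖, norm_nonneg _, fabs_apply f x⟩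

lemma l2f_fabs (f : G →₀ ℂ) : l2f ⇑(fabs f) = l2f ⇑f := by
  unfold l2f
  congr 1
  refine tsum_congr fun g => ?_
  rw [fabs_apply]
  simp

lemma l2f_mono {φ ψ : G → ℂ} {S : Finset G} (hφ : ∀ g, φ g ≠ 0 → g ∈ S)
    (hψ : ∀ g, ψ g ≠ 0 → g ∈ S) (h : ∀ g, ‖φ g‖ ≤ ‖ψ g‖) : l2f φ ≤ l2f ψ := by
  rw [l2f_eq_sum hφ, l2f_eq_sum hψ]
  exact Real.sqrt_le_sqrt (Finset.sum_le_sum fun g _ =>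
    pow_le_pow_left₀ (norm_nonneg _) (h g) 2)

lemma conv_dominate (f ξ : G →₀ ℂ) (g : G) :
    ‖convG f ⇑ξ g‖ ≤ ‖convG (fabs f) ⇑(fabs ξ) g‖ := by
  have h1 : convG (fabs f) ⇑(fabs ξ) g
      = ((∑ x ∈ f.support, ‖f x‖ * ‖ξ (x⁻¹ * g)‖ : ℝ) : ℂ) := by
    unfold convG
    rw [fabs_support]
    push_cast
    exact Finset.sum_congr rfl fun x _ => by rw [fabs_apply, fabs_apply]
  rw [h1, Complex.norm_real, Real.norm_of_nonneg
    (Finset.sum_nonneg fun x _ => mul_nonneg (norm_nonneg _) (norm_nonneg _))]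
  calc ‖convG f ⇑ξ g‖ ≤ ∑ x ∈ f.support, ‖f x * ξ (x⁻¹ * g)‖ := norm_sum_le _ _
    _ = ∑ x ∈ f.support, ‖f x‖ * ‖ξ (x⁻¹ * g)‖ :=
        Finset.sum_congr rfl fun x _ => norm_mul _ _

end Aux

lemma sum_inv_sq_le (N : ℕ) :
    ∑ n ∈ Finset.range N, (1 / ((n : ℝ) + 1)) ^ 2 ≤ 2 - 2 / ((N : ℝ) + 1) := by
  induction N with
  | zero => norm_num
  | succ N ih =>
      rw [Finset.sum_range_succ]
      have hx : (0:ℝ) ≤ (N:ℝ) := Nat.cast_nonneg N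
      have h1 : (0:ℝ) < (N:ℝ) + 1 := by linarith
      have h2 : (0:ℝ) < (N:ℝ) + 1 + 1 := by linarith
      have key2 : (1 / ((N:ℝ) + 1)) ^ 2 ≤ 2 / ((N:ℝ) + 1) - 2 / ((N:ℝ) + 1 + 1) := by
        rw [div_sub_div _ _ h1.ne' h2.ne', div_pow, one_pow,
          div_le_div_iff₀ (by positivity) (by positivity)]
        nlinarith [hx]
      have key : (2 - 2 / ((N:ℝ) + 1)) + (1 / ((N:ℝ) + 1)) ^ 2 ≤ 2 - 2 / ((N:ℝ) + 1 + 1) := by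
        linarith
      calc ∑ n ∈ Finset.range N, (1 / ((n : ℝ) + 1)) ^ 2 + (1 / ((N:ℝ) + 1)) ^ 2
          ≤ (2 - 2 / ((N : ℝ) + 1)) + (1 / ((N:ℝ) + 1)) ^ 2 := by linarith
        _ ≤ 2 - 2 / ((N:ℝ) + 1 + 1) := key
        _ = 2 - 2 / ((↑(N+1) : ℝ) + 1) := by push_cast; ring

lemma sum_inv_sq_le_two (N : ℕ) :
    ∑ n ∈ Finset.range N, (1 / ((n : ℝ) + 1)) ^ 2 ≤ 2 := by
  refine (sum_inv_sq_le N).trans ?_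
  have : (0:ℝ) ≤ 2 / ((N:ℝ) + 1) := by positivity
  linarith

lemma poly_bound (P : Polynomial ℝ) :
    ∃ C₁ : ℝ, 0 < C₁ ∧ ∀ r : ℝ, 0 ≤ r → P.eval r ≤ C₁ * (1 + r) ^ P.natDegree := by
  refine ⟨∑ i ∈ Finset.range (P.natDegree + 1), |P.coeff i| + 1, by positivity, fun r hr => ?_⟩
  rw [Polynomial.eval_eq_sum_range]
  have h1 : ∀ i ∈ Finset.range (P.natDegree + 1),
      P.coeff i * r ^ i ≤ |P.coeff i| * (1 + r) ^ P.natDegree := by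
    intro i hi
    have hri : r ^ i ≤ (1 + r) ^ P.natDegree := by
      calc r ^ i ≤ (1 + r) ^ i := pow_le_pow_left₀ hr (by linarith) i
        _ ≤ (1 + r) ^ P.natDegree :=
            pow_le_pow_right₀ (by linarith) (Finset.mem_range_succ_iff.mp hi)
    calc P.coeff i * r ^ i ≤ |P.coeff i| * r ^ i :=
          mul_le_mul_of_nonneg_right (le_abs_self _) (pow_nonneg hr i)
      _ ≤ |P.coeff i| * (1 + r) ^ P.natDegree :=
          mul_le_mul_of_nonneg_left hri (abs_nonneg _)
  calc ∑ i ∈ Finset.range (P.natDegree + 1), P.coeff i * r ^ i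
      ≤ ∑ i ∈ Finset.range (P.natDegree + 1), |P.coeff i| * (1 + r) ^ P.natDegree :=
        Finset.sum_le_sum h1
    _ = (∑ i ∈ Finset.range (P.natDegree + 1), |P.coeff i|) * (1 + r) ^ P.natDegree :=
        (Finset.sum_mul _ _ _).symm
    _ ≤ (∑ i ∈ Finset.range (P.natDegree + 1), |P.coeff i| + 1) * (1 + r) ^ P.natDegree :=
        mul_le_mul_of_nonneg_right (by linarith) (by positivity)

/-- a polynomial bound `‖λ(f)‖ ≤ P(r) ‖f‖₂` for nonnegative `f`
supported in balls implies the Haagerup inequality for all finitely supported `f`. -/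
theorem stmt4 {G : Type*} [Group G] (L : G → ℝ) (hL : IsLengthFunction L)
    (P : Polynomial ℝ)
    (hyp : ∀ r : ℝ, 0 < r → ∀ f : G →₀ ℂ, NonnegFun ⇑f →
      (∀ g ∈ f.support, L g ≤ r) → opNG f ≤ P.eval r * l2f ⇑f) :
    ∃ C : ℝ, 0 < C ∧ ∃ s : ℝ, 0 < s ∧
      ∀ f : G →₀ ℂ, opNG f ≤ C * wnormG L s f := by
  classical
  obtain ⟨hL0, -, -, -⟩ := hL
  obtain ⟨C₁, hC₁, hP⟩ := poly_bound P
  set d := P.natDegree with hd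
  set C₂ := C₁ * 2 ^ d with hC₂def
  have hC₂ : 0 < C₂ := by positivity
  set s : ℝ := (d : ℝ) + 1 with hs
  have hs0 : 0 < s := by positivity
  refine ⟨Real.sqrt 2 * C₂, by positivity, s, hs0, fun f => ?_⟩
  have hPn : ∀ n : ℕ, P.eval ((n : ℝ) + 1) ≤ C₂ * ((n : ℝ) + 1) ^ d := by
    intro n
    have hn0 : (0:ℝ) ≤ (n:ℝ) := Nat.cast_nonneg n
    calc P.eval ((n:ℝ)+1) ≤ C₁ * (1 + ((n:ℝ)+1)) ^ d := hP _ (by positivity)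
      _ ≤ C₁ * (2 * ((n:ℝ)+1)) ^ d := by
          refine mul_le_mul_of_nonneg_left
            (pow_le_pow_left₀ (by positivity) (by linarith) d) hC₁.le
      _ = C₂ * ((n:ℝ)+1) ^ d := by rw [mul_pow, hC₂def]; ring
  have lemC : ∀ (r : ℝ), 0 < r → ∀ h : G →₀ ℂ, (∀ g ∈ h.support, L g ≤ r) →
      opNG h ≤ P.eval r * l2f ⇑h := by
    intro r hr h hsup
    refine opNG_le fun ξ hξ => ?_
    have h1 : l2f (convG h ⇑ξ) ≤ l2f (convG (fabs h) ⇑(fabs ξ)) := by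
      refine l2f_mono (S := h.support * ξ.support) (fun g hg => convG_support hg)
        (fun g hg => ?_) (conv_dominate h ξ)
      have h2 := convG_support hg
      rwa [fabs_support, fabs_support] at h2
    have h2 : l2f (convG (fabs h) ⇑(fabs ξ)) ≤ opNG (fabs h) :=
      le_opNG _ _ (by rwa [l2f_fabs])
    have h3 : opNG (fabs h) ≤ P.eval r * l2f ⇑(fabs h) :=
      hyp r hr (fabs h) (fabs_nonnegFun h) (by rwa [fabs_support])
    rw [l2f_fabs] at h3
    exact h1.trans (h2.trans h3)
  set N := f.support.sup fun g => Nat.floor (L g) with hN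
  set p : ℕ → G → Prop := fun n g => (n : ℝ) ≤ L g ∧ L g < (n : ℝ) + 1 with hp
  set fn : ℕ → (G →₀ ℂ) := fun n => f.filter (p n) with hfn
  have hfnsupp : ∀ n, (fn n).support = f.support.filter (p n) := fun n => Finsupp.support_filter (p n) f
  have hsub : ∀ n, (fn n).support ⊆ f.support := fun n => by
    rw [hfnsupp]; exact Finset.filter_subset _ _
  have hmemp : ∀ n g, g ∈ (fn n).support → p n g := by
    intro n g hg; rw [hfnsupp] at hg; exact (Finset.mem_filter.mp hg).2
  have huniq : ∀ g ∈ f.support, ∀ n, p n g ↔ n = Nat.floor (L g) := by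
    intro g _ n
    constructor
    · rintro ⟨h1, h2⟩
      exact ((Nat.floor_eq_iff (hL0 g)).mpr ⟨h1, h2⟩).symm
    · rintro rfl
      exact ⟨Nat.floor_le (hL0 g), Nat.lt_floor_add_one _⟩
  have hmemN : ∀ g ∈ f.support, Nat.floor (L g) ∈ Finset.range (N + 1) := by
    intro g hg
    exact Finset.mem_range_succ_iff.mpr (Finset.le_sup (f := fun g => Nat.floor (L g)) hg)
  have hdecomp : ∀ g, f g = ∑ n ∈ Finset.range (N + 1), fn n g := by
    intro g
    by_cases hg : g ∈ f.support
    · rw [Finset.sum_eq_single (Nat.floor (L g))]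
      · exact (Finsupp.filter_apply_pos _ _ ((huniq g hg _).mpr rfl)).symm
      · intro n _ hn
        exact Finsupp.filter_apply_neg _ _ (fun hpg => hn ((huniq g hg n).mp hpg))
      · intro habs; exact absurd (hmemN g hg) habs
    · have h0 : f g = 0 := Finsupp.notMem_support_iff.mp hg
      rw [h0]
      symm
      refine Finset.sum_eq_zero fun n _ => ?_
      show f.filter (p n) g = 0
      simp [Finsupp.filter_apply, h0]
  have hpart : ∀ (h : G → ℝ),
      ∑ n ∈ Finset.range (N + 1), ∑ g ∈ (fn n).support, h g = ∑ g ∈ f.support, h g := by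
    intro h
    have h1 : ∀ n, ∑ g ∈ (fn n).support, h g
        = ∑ g ∈ f.support, if p n g then h g else 0 := by
      intro n; rw [hfnsupp, Finset.sum_filter]
    simp_rw [h1]
    rw [Finset.sum_comm]
    refine Finset.sum_congr rfl fun g hg => ?_
    rw [Finset.sum_eq_single (Nat.floor (L g))]
    · rw [if_pos ((huniq g hg _).mpr rfl)]
    · intro n _ hn; rw [if_neg (fun hpg => hn ((huniq g hg n).mp hpg))]
    · intro habs; exact absurd (hmemN g hg) habs
  have hconv : ∀ ξ : G →₀ ℂ, ∀ g,
      convG f ⇑ξ g = ∑ n ∈ Finset.range (N + 1), convG (fn n) ⇑ξ g := by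
    intro ξ g
    rw [convG]
    calc ∑ x ∈ f.support, f x * ξ (x⁻¹ * g)
        = ∑ x ∈ f.support, ∑ n ∈ Finset.range (N+1), fn n x * ξ (x⁻¹ * g) := by
          refine Finset.sum_congr rfl fun x _ => ?_
          rw [hdecomp x, Finset.sum_mul]
      _ = ∑ n ∈ Finset.range (N+1), ∑ x ∈ f.support, fn n x * ξ (x⁻¹ * g) :=
          Finset.sum_comm
      _ = ∑ n ∈ Finset.range (N+1), convG (fn n) ⇑ξ g := by
          refine Finset.sum_congr rfl fun n _ => (convG_eq_sum_subset (hsub n) _ _).symm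
  have step1 : opNG f ≤ ∑ n ∈ Finset.range (N+1), P.eval ((n:ℝ)+1) * l2f ⇑(fn n) := by
    refine opNG_le fun ξ hξ => ?_
    set S := f.support * ξ.support with hSdef
    have hS : ∀ g, convG f ⇑ξ g ≠ 0 → g ∈ S := fun g h => convG_support h
    have hSn : ∀ n, ∀ g, convG (fn n) ⇑ξ g ≠ 0 → g ∈ S := fun n g h =>
      Finset.mul_subset_mul (hsub n) Finset.Subset.rfl (convG_support h)
    calc l2f (convG f ⇑ξ) = ‖eVec S (convG f ⇑ξ)‖ := l2f_eq_norm_eVec hS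
      _ = ‖∑ n ∈ Finset.range (N+1), eVec S (convG (fn n) ⇑ξ)‖ := by
          rw [show convG f ⇑ξ
              = fun g => ∑ n ∈ Finset.range (N+1), convG (fn n) ⇑ξ g from funext (hconv ξ),
            eVec_sum]
      _ ≤ ∑ n ∈ Finset.range (N+1), ‖eVec S (convG (fn n) ⇑ξ)‖ := norm_sum_le _ _
      _ = ∑ n ∈ Finset.range (N+1), l2f (convG (fn n) ⇑ξ) :=
          Finset.sum_congr rfl fun n _ => (l2f_eq_norm_eVec (hSn n)).symm
      _ ≤ ∑ n ∈ Finset.range (N+1), opNG (fn n) :=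
          Finset.sum_le_sum fun n _ => le_opNG _ _ hξ
      _ ≤ ∑ n ∈ Finset.range (N+1), P.eval ((n:ℝ)+1) * l2f ⇑(fn n) := by
          refine Finset.sum_le_sum fun n _ => ?_
          exact lemC ((n:ℝ)+1) (by positivity) (fn n) fun g hg => ((hmemp n g hg).2).le
  have hl2fn : ∀ n, (l2f ⇑(fn n)) ^ 2 = ∑ g ∈ (fn n).support, ‖f g‖ ^ 2 := by
    intro n
    rw [l2f_eq_sum (S := (fn n).support) (fun g hg => Finsupp.mem_support_iff.mpr hg),
      Real.sq_sqrt (Finset.sum_nonneg fun g _ => sq_nonneg _)]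
    refine Finset.sum_congr rfl fun g hg => ?_
    have : fn n g = f g := Finsupp.filter_apply_pos _ _ (hmemp n g hg)
    rw [this]
  have hwt : ∀ n, ∀ g ∈ (fn n).support,
      (((n:ℝ)+1) ^ (d+1)) ^ 2 ≤ (1 + L g) ^ (2 * s) := by
    intro n g hg
    have h1 : (n:ℝ) ≤ L g := (hmemp n g hg).1
    have h2 : ((n:ℝ)+1) ≤ 1 + L g := by linarith
    have h0 : (0:ℝ) ≤ (n:ℝ)+1 := by positivity
    calc (((n:ℝ)+1) ^ (d+1)) ^ 2 = ((n:ℝ)+1) ^ (2*(d+1)) := by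
          rw [← pow_mul, Nat.mul_comm]
      _ = ((n:ℝ)+1) ^ ((2*(d+1) : ℕ) : ℝ) := (Real.rpow_natCast _ _).symm
      _ ≤ (1 + L g) ^ ((2*(d+1) : ℕ) : ℝ) :=
          Real.rpow_le_rpow h0 h2 (Nat.cast_nonneg _)
      _ = (1 + L g) ^ (2 * s) := by
          congr 1
          rw [hs]
          push_cast
          ring
  calc opNG f ≤ ∑ n ∈ Finset.range (N+1), P.eval ((n:ℝ)+1) * l2f ⇑(fn n) := step1
    _ ≤ ∑ n ∈ Finset.range (N+1),
          (C₂ * (1/((n:ℝ)+1))) * (((n:ℝ)+1)^(d+1) * l2f ⇑(fn n)) := by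
        refine Finset.sum_le_sum fun n _ => ?_
        have hpos : (0:ℝ) < (n:ℝ)+1 := by positivity
        have heq : (C₂ * (1/((n:ℝ)+1))) * (((n:ℝ)+1)^(d+1)) = C₂ * ((n:ℝ)+1)^d := by
          field_simp
          ring
        calc P.eval ((n:ℝ)+1) * l2f ⇑(fn n) ≤ (C₂ * ((n:ℝ)+1)^d) * l2f ⇑(fn n) :=
              mul_le_mul_of_nonneg_right (hPn n) (l2f_nonneg _)
          _ = (C₂ * (1/((n:ℝ)+1))) * (((n:ℝ)+1)^(d+1) * l2f ⇑(fn n)) := by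
              rw [← heq]; ring
    _ ≤ Real.sqrt (∑ n ∈ Finset.range (N+1), (C₂ * (1/((n:ℝ)+1)))^2) *
        Real.sqrt (∑ n ∈ Finset.range (N+1), (((n:ℝ)+1)^(d+1) * l2f ⇑(fn n))^2) :=
        Real.sum_mul_le_sqrt_mul_sqrt _ _ _
    _ ≤ (Real.sqrt 2 * C₂) * wnormG L s f := by
        have hA : ∑ n ∈ Finset.range (N+1), (C₂ * (1/((n:ℝ)+1)))^2 ≤ C₂^2 * 2 := by
          have h2 := sum_inv_sq_le_two (N+1)
          calc ∑ n ∈ Finset.range (N+1), (C₂ * (1/((n:ℝ)+1)))^2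
              = C₂^2 * ∑ n ∈ Finset.range (N+1), (1/((n:ℝ)+1))^2 := by
                rw [Finset.mul_sum]
                exact Finset.sum_congr rfl fun n _ => by ring
            _ ≤ C₂^2 * 2 := mul_le_mul_of_nonneg_left h2 (sq_nonneg _)
        have hsqrtA : Real.sqrt (∑ n ∈ Finset.range (N+1), (C₂ * (1/((n:ℝ)+1)))^2)
            ≤ Real.sqrt 2 * C₂ := by
          refine (Real.sqrt_le_sqrt hA).trans_eq ?_
          rw [Real.sqrt_mul (sq_nonneg _), Real.sqrt_sq hC₂.le]
          ring
        have hB : ∑ n ∈ Finset.range (N+1), (((n:ℝ)+1)^(d+1) * l2f ⇑(fn n))^2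
            ≤ ∑ g ∈ f.support, ‖f g‖^2 * (1 + L g)^(2*s) := by
          rw [← hpart (fun g => ‖f g‖^2 * (1 + L g)^(2*s))]
          refine Finset.sum_le_sum fun n _ => ?_
          rw [mul_pow, hl2fn n, Finset.mul_sum]
          refine Finset.sum_le_sum fun g hg => ?_
          calc (((n:ℝ)+1)^(d+1))^2 * ‖f g‖^2 ≤ (1 + L g)^(2*s) * ‖f g‖^2 :=
              mul_le_mul_of_nonneg_right (hwt n g hg) (sq_nonneg _)
            _ = ‖f g‖^2 * (1 + L g)^(2*s) := mul_comm _ _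
        have hsqrtB : Real.sqrt (∑ n ∈ Finset.range (N+1),
              (((n:ℝ)+1)^(d+1) * l2f ⇑(fn n))^2) ≤ wnormG L s f := by
          rw [wnormG]
          exact Real.sqrt_le_sqrt hB
        exact mul_le_mul hsqrtA hsqrtB (Real.sqrt_nonneg _) (by positivity)
end

section
/- Let A be a Banach algebra with unit and let 𝒜 be a dense unital subalgebra of A. Suppose there exists 0 < δ < 1 such that for every a ∈ 𝒜 with ‖a‖ < δ, the sum of the series Σ_{n≥1} aⁿ (which converges in A) belongs to 𝒜. Then 𝒜 is spectrally invariant in A: every element x ∈ 𝒜 that is invertible in A is invertible in 𝒜. -/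
/-- a dense unital subalgebra `𝒜` of a unital Banach algebra `A` that
contains the sums of Neumann series `∑_{n ≥ 1} aⁿ` of all its elements of norm `< δ`
(for some fixed `0 < δ < 1`) is spectrally invariant in `A`. -/
theorem stmt13 {A : Type*} [NormedRing A] [NormedAlgebra ℂ A] [CompleteSpace A]
    (𝒜 : Subalgebra ℂ A) (hdense : Dense (𝒜 : Set A))
    (δ : ℝ) (hδ0 : 0 < δ) (hδ1 : δ < 1)
    (hser : ∀ a ∈ 𝒜, ‖a‖ < δ → (∑' n : ℕ, a ^ (n + 1)) ∈ 𝒜) :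
    ∀ x ∈ 𝒜, IsUnit x → ∃ y ∈ 𝒜, x * y = 1 ∧ y * x = 1 := by
  intro x hx hxu
  obtain ⟨u, rfl⟩ := hxu
  -- pick b ∈ 𝒜 close to u⁻¹
  have hε : 0 < δ / (‖(u : A)‖ + 1) := by positivity
  obtain ⟨b, hb𝒜, hb⟩ : ∃ b ∈ (𝒜 : Set A), dist (↑u⁻¹ : A) b < δ / (‖(u : A)‖ + 1) := by
    have := Metric.mem_closure_iff.mp (hdense (↑u⁻¹ : A))
    exact this _ hε
  set a : A := 1 - (u : A) * b with ha
  have ha𝒜 : a ∈ 𝒜 := by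
    exact sub_mem (one_mem 𝒜) (mul_mem hx hb𝒜)
  have hanorm : ‖a‖ < δ := by
    have : a = (u : A) * ((↑u⁻¹ : A) - b) := by
      rw [mul_sub, u.mul_inv]
    calc ‖a‖ ≤ ‖(u : A)‖ * ‖(↑u⁻¹ : A) - b‖ := by rw [this]; exact norm_mul_le _ _
      _ ≤ (‖(u : A)‖ + 1) * ‖(↑u⁻¹ : A) - b‖ := by
          apply mul_le_mul_of_nonneg_right (by linarith) (norm_nonneg _)
      _ < (‖(u : A)‖ + 1) * (δ / (‖(u : A)‖ + 1)) := by
          apply mul_lt_mul_of_pos_left _ (by positivity)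
          rwa [← dist_eq_norm]
      _ = δ := by field_simp
  have ha1 : ‖a‖ < 1 := hanorm.trans hδ1
  have hS : (∑' n : ℕ, a ^ (n + 1)) ∈ 𝒜 := hser a ha𝒜 hanorm
  set S : A := ∑' n : ℕ, a ^ (n + 1) with hSdef
  have hsum : ∑' n : ℕ, a ^ n = 1 + S := by
    rw [(summable_geometric_of_norm_lt_one ha1).tsum_eq_zero_add, pow_zero]
  have hone : (1 - a) * (1 + S) = 1 := by
    rw [← hsum]; exact mul_neg_geom_series a ha1
  have hxb : (u : A) * b = 1 - a := by rw [ha, sub_sub_cancel]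
  refine ⟨b * (1 + S), mul_mem hb𝒜 (add_mem (one_mem 𝒜) hS), ?_, ?_⟩
  · rw [← mul_assoc, hxb, hone]
  · have h1 : (u : A) * (b * (1 + S)) = 1 := by rw [← mul_assoc, hxb, hone]
    have h2 : b * (1 + S) = ↑u⁻¹ := (u.inv_eq_of_mul_eq_one_right h1).symm
    rw [h2, u.inv_mul]
end
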